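/- First-order optimal points satisfy the scaling condition: for θ(u,v) = σ_u(u)·σ_v(v) with σ_u, σ_v gauge functions, any first-order optimal point (Ũ,Ṽ) of f(U,V) = ℓ(Y,UVᵀ) + λ∑_i θ(U_i,V_i) satisfies Ũ_iᵀ(−(1/λ)∇_X ℓ(Y,ŨṼᵀ))Ṽ_i = θ(Ũ_i,Ṽ_i) for all i. -/

import Mathlib

open Matrix Filter
open scoped ENNReal BigOperators

/-- The matrix factorization regularizer: infimum over all factorizations `X = U * Vᵀ`
(with a variable number `r` of columns) of the sum of `θ` applied to column pairs. -/
noncomputable def Omega {D N : ℕ} (θ : (Fin D → ℝ) → (Fin N → ℝ) → ℝ≥0∞)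
    (X : Matrix (Fin D) (Fin N) ℝ) : ℝ≥0∞ :=
  ⨅ (r : ℕ) (U : Matrix (Fin D) (Fin r) ℝ) (V : Matrix (Fin N) (Fin r) ℝ)
    (_ : U * Vᵀ = X), ∑ i : Fin r, θ (fun d => U d i) (fun n => V n i)

/-- `θ` is a rank-1 regularizer: positively homogeneous of degree 2, `θ(0,0) = 0`
(nonnegativity is automatic in `ℝ≥0∞`), and `θ(uₙ,vₙ) → ∞` whenever `‖uₙvₙᵀ‖_F → ∞`. -/
def IsRankOneReg {D N : ℕ} (θ : (Fin D → ℝ) → (Fin N → ℝ) → ℝ≥0∞) : Prop :=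
  (∀ (α : ℝ), 0 ≤ α → ∀ u v, θ (α • u) (α • v) = ENNReal.ofReal (α ^ 2) * θ u v) ∧
  (θ 0 0 = 0) ∧
  (∀ (u : ℕ → Fin D → ℝ) (v : ℕ → Fin N → ℝ),
    Tendsto (fun k => Real.sqrt (∑ d, ∑ m, (u k d * v k m) ^ 2)) atTop atTop →
    Tendsto (fun k => θ (u k) (v k)) atTop (nhds ⊤))

/-- The Frobenius (trace) inner product on matrices. -/
noncomputable def frobInner {D N : ℕ} (A B : Matrix (Fin D) (Fin N) ℝ) : ℝ :=
  ∑ d, ∑ n, A d n * B d n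

/-- First-order optimal points satisfy the per-column scaling condition
`Ũᵢᵀ(−(1/λ)∇_Xℓ)Ṽᵢ = θ(Ũᵢ,Ṽᵢ)` when `θ(u,v) = σ_u(u)·σ_v(v)` for gauge functions. -/
theorem first_order_scaling {D N r : ℕ}
    (σu : (Fin D → ℝ) → ℝ) (σv : (Fin N → ℝ) → ℝ)
    -- σu, σv are gauge functions: nonnegative, vanish at 0, positively homogeneous, convex
    (hσu0 : σu 0 = 0) (hσunn : ∀ u, 0 ≤ σu u)
    (hσuhom : ∀ (c : ℝ), 0 ≤ c → ∀ u, σu (c • u) = c * σu u)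
    (hσuconv : ConvexOn ℝ Set.univ σu)
    (hσv0 : σv 0 = 0) (hσvnn : ∀ v, 0 ≤ σv v)
    (hσvhom : ∀ (c : ℝ), 0 ≤ c → ∀ v, σv (c • v) = c * σv v)
    (hσvconv : ConvexOn ℝ Set.univ σv)
    (ℓ : (Fin D → Fin N → ℝ) → ℝ)
    (hconv : ConvexOn ℝ Set.univ ℓ) (hdiff : Differentiable ℝ ℓ)
    (lam : ℝ) (hlam : 0 < lam)
    (Ut : Matrix (Fin D) (Fin r) ℝ) (Vt : Matrix (Fin N) (Fin r) ℝ)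
    -- first-order optimality: 0 ∈ ∇_Xℓ·Ṽᵢ + λ∂_u θ(Ũᵢ,Ṽᵢ) and symmetrically in v
    (hfirstU : ∀ i : Fin r, ∃ g : Fin D → ℝ,
      (∀ u : Fin D → ℝ,
        σu (fun d => Ut d i) * σv (fun n => Vt n i) + ∑ d, g d * (u d - Ut d i)
          ≤ σu u * σv (fun n => Vt n i)) ∧
      (∀ d : Fin D,
        fderiv ℝ ℓ (Ut * Vtᵀ) (vecMulVec (Pi.single d 1) (fun n => Vt n i)) + lam * g d = 0))
    (hfirstV : ∀ i : Fin r, ∃ h : Fin N → ℝ,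
      (∀ v : Fin N → ℝ,
        σu (fun d => Ut d i) * σv (fun n => Vt n i) + ∑ n, h n * (v n - Vt n i)
          ≤ σu (fun d => Ut d i) * σv v) ∧
      (∀ n : Fin N,
        fderiv ℝ ℓ (Ut * Vtᵀ) (vecMulVec (fun d => Ut d i) (Pi.single n 1)) + lam * h n = 0)) :
    ∀ i : Fin r,
      (-(1 / lam)) * fderiv ℝ ℓ (Ut * Vtᵀ) (vecMulVec (fun d => Ut d i) (fun n => Vt n i))
        = σu (fun d => Ut d i) * σv (fun n => Vt n i) := by
  intro i
  obtain ⟨g, hsub, hgrad⟩ := hfirstU i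
  set θ := σu (fun d => Ut d i) * σv (fun n => Vt n i) with hθ
  -- Euler identity: ∑ g d * Ut d i = θ
  have h0 := hsub 0
  rw [hσu0, zero_mul] at h0
  have h2 := hsub ((2:ℝ) • fun d => Ut d i)
  rw [hσuhom 2 (by norm_num)] at h2
  have hs0 : ∑ d, g d * ((0:Fin D → ℝ) d - Ut d i) = -∑ d, g d * Ut d i := by
    rw [← Finset.sum_neg_distrib]; apply Finset.sum_congr rfl; intro d _
    simp only [Pi.zero_apply, zero_sub, mul_neg]
  have hs2 : ∑ d, g d * (((2:ℝ) • fun d => Ut d i) d - Ut d i) = ∑ d, g d * Ut d i := by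
    apply Finset.sum_congr rfl; intro d _
    simp only [Pi.smul_apply, smul_eq_mul]; ring
  rw [hs0] at h0
  rw [hs2] at h2
  have hEuler : ∑ d, g d * Ut d i = θ := by
    have : 2 * σu (fun d => Ut d i) * σv (fun n => Vt n i) = 2 * θ := by rw [hθ]; ring
    nlinarith [h0, h2]
  -- decompose the rank-one matrix
  have hlin : vecMulVec (fun d => Ut d i) (fun n => Vt n i)
      = ∑ d, Ut d i • vecMulVec (Pi.single d 1) (fun n => Vt n i) := by
    ext d n
    simp only [vecMulVec_apply, Finset.sum_apply, Matrix.sum_apply, Pi.smul_apply,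
      Matrix.smul_apply, smul_eq_mul, Pi.single_apply]
    rw [Finset.sum_eq_single d]
    · simp
    · intro b _ hb
      simp [Matrix.smul_apply, vecMulVec_apply, Pi.single_apply, Ne.symm hb]
    · simp
  set L := fderiv ℝ ℓ (Ut * Vtᵀ) with hL
  have hLval : L (vecMulVec (fun d => Ut d i) (fun n => Vt n i))
      = ∑ d, Ut d i * L (vecMulVec (Pi.single d 1) (fun n => Vt n i)) := by
    rw [hlin]; erw [map_sum]
    apply Finset.sum_congr rfl
    intro d _
    erw [L.map_smul, smul_eq_mul]
  have hLd : ∀ d, L (vecMulVec (Pi.single d 1) (fun n => Vt n i)) = -(lam * g d) := by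
    intro d; have := hgrad d; linarith
  rw [hLval]
  have : ∑ d, Ut d i * L (vecMulVec (Pi.single d 1) (fun n => Vt n i))
      = -lam * ∑ d, g d * Ut d i := by
    rw [Finset.mul_sum]
    apply Finset.sum_congr rfl
    intro d _
    rw [hLd d]; ring
  rw [this, hEuler]
  field_simp
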